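/- Assume d is odd and let A be a circular convolution operator on ℓ²(ℤ_d×ℤ_d) with kernel a possessing ℓ^∞ symmetry in frequency response. Let Ω = ({0,1} × ℤ_d) ∪ (ℤ_d × {0,1}) and l_{(i,j)} = (d−1)/2 for each (i,j) ∈ Ω. Then Y = {e_{(i,j)}, A e_{(i,j)}, …, A^{(d−1)/2} e_{(i,j)} : (i,j) ∈ Ω} is a frame for ℓ²(ℤ_d×ℤ_d). -/

import Mathlib

open Matrix

/-- Unnormalized 2D discrete Fourier transform of `a : ℤ_d × ℤ_d → ℂ`. -/
noncomputable def hatKer2 (d : ℕ) [NeZero d] (a : ZMod d × ZMod d → ℂ) :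
    ZMod d × ZMod d → ℂ :=
  fun j => ∑ k : ZMod d × ZMod d,
    a k * Complex.exp (-(2 * (Real.pi : ℂ) * Complex.I) *
      ((j.1.val : ℂ) * (k.1.val : ℂ) + (j.2.val : ℂ) * (k.2.val : ℂ)) / (d : ℂ))

/-- The 2D circular convolution operator with kernel `a`, as a matrix. -/
def convMat2 (d : ℕ) (a : ZMod d × ZMod d → ℂ) :
    Matrix (ZMod d × ZMod d) (ZMod d × ZMod d) ℂ :=
  Matrix.of fun k i => a (k - i)

/-- The Kronecker product `F_d ⊗ F_d`: its entry at `((i₁,i₂),(j₁,j₂))` is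
`(1/d) ω_d^{i₁j₁ + i₂j₂}`. -/
noncomputable def F2Mat (d : ℕ) : Matrix (ZMod d × ZMod d) (ZMod d × ZMod d) ℂ :=
  Matrix.of fun i j => ((d : ℂ))⁻¹ * Complex.exp (-(2 * (Real.pi : ℂ) * Complex.I) *
    ((i.1.val : ℂ) * (j.1.val : ℂ) + (i.2.val : ℂ) * (j.2.val : ℂ)) / (d : ℂ))

/-- For odd `d`, the absolute value of the representative of `x : ℤ_d` in
`{-(d-1)/2, …, (d-1)/2}`. -/
def zAbs (d : ℕ) [NeZero d] (x : ZMod d) : ℕ := min x.val (d - x.val)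

set_option linter.unusedSectionVars false
namespace Stmt16

noncomputable def E (d : ℕ) (m : ℤ) : ℂ :=
  Complex.exp (2 * Real.pi * Complex.I * m / d)

variable {d : ℕ}

lemma E_add (x y : ℤ) : E d (x + y) = E d x * E d y := by
  rw [E, E, E, ← Complex.exp_add]; congr 1; push_cast; ring

@[simp] lemma E_zero : E d 0 = 1 := by simp [E]

lemma E_eq_one_iff (hd : d ≠ 0) (m : ℤ) : E d m = 1 ↔ (d : ℤ) ∣ m := by
  rw [E, Complex.exp_eq_one_iff]
  have hd' : (d : ℂ) ≠ 0 := Nat.cast_ne_zero.mpr hd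
  have h2 : (2 * (Real.pi:ℂ) * Complex.I) ≠ 0 := by
    simp [Real.pi_ne_zero, Complex.I_ne_zero]
  constructor
  · rintro ⟨n, hn⟩
    refine ⟨n, ?_⟩
    field_simp at hn
    have hm : (m : ℂ) = (d : ℂ) * n := by
      apply mul_left_cancel₀ h2
      rw [hn]
    exact_mod_cast hm
  · rintro ⟨n, rfl⟩
    refine ⟨n, ?_⟩
    field_simp
    simp

lemma E_ne_zero (m : ℤ) : E d m ≠ 0 := Complex.exp_ne_zero _

lemma E_eq_E_iff (hd : d ≠ 0) (x y : ℤ) : E d x = E d y ↔ (d : ℤ) ∣ x - y := by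
  rw [← E_eq_one_iff hd]
  constructor
  · intro h
    have h1 : E d (x - y) * E d y = E d y := by
      rw [← E_add]; simpa using h
    exact mul_right_cancel₀ (E_ne_zero y) (h1.trans (one_mul (E d y)).symm)
  · intro h
    have h1 : E d x = E d (x - y) * E d y := by rw [← E_add]; ring_nf
    rw [h1, h, one_mul]

lemma E_pow (t : ℕ) (m : ℤ) : E d ((t : ℤ) * m) = (E d m) ^ t := by
  rw [E, E, ← Complex.exp_nat_mul]; congr 1; push_cast; ring

lemma sum_val [NeZero d] (f : ℕ → ℂ) :
    ∑ j : ZMod d, f j.val = ∑ t ∈ Finset.range d, f t := by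
  refine Finset.sum_nbij' (fun j => j.val) (fun t => (t : ZMod d)) ?_ ?_ ?_ ?_ ?_
  · intro j _; exact Finset.mem_range.mpr (ZMod.val_lt j)
  · intro t _; exact Finset.mem_univ _
  · intro j _; exact ZMod.natCast_zmod_val j
  · intro t ht; exact ZMod.val_cast_of_lt (Finset.mem_range.mp ht)
  · intro j _; rfl

lemma sum_E [NeZero d] (m : ℤ) :
    ∑ j : ZMod d, E d ((j.val : ℤ) * m) = if (d : ℤ) ∣ m then (d : ℂ) else 0 := by
  have hd : d ≠ 0 := NeZero.ne d
  rw [Finset.sum_congr rfl (fun j _ => E_pow j.val m), sum_val (fun t => (E d m) ^ t)]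
  by_cases h : (d : ℤ) ∣ m
  · rw [if_pos h]
    have h1 : E d m = 1 := (E_eq_one_iff hd m).mpr h
    simp [h1]
  · rw [if_neg h]
    have hne : E d m ≠ 1 := fun hc => h ((E_eq_one_iff hd m).mp hc)
    rw [geom_sum_eq hne]
    have h1 : (E d m) ^ d = 1 := by
      rw [← E_pow, E_eq_one_iff hd]
      exact Dvd.intro m rfl
    rw [h1, sub_self, zero_div]

lemma dvd_of_zmod [NeZero d] (z : ℤ) (h : ((z : ZMod d) = 0)) : (d : ℤ) ∣ z :=
  (ZMod.intCast_zmod_eq_zero_iff_dvd z d).mp h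

lemma E_congr [NeZero d] {x y : ℤ} (h : ((x : ZMod d) = (y : ZMod d))) : E d x = E d y := by
  rw [E_eq_E_iff (NeZero.ne d)]
  apply dvd_of_zmod
  push_cast
  rw [h, sub_self]

lemma val_sub_dvd [NeZero d] (x y : ZMod d) :
    (d : ℤ) ∣ ((x.val : ℤ) - y.val) ↔ x = y := by
  constructor
  · intro h
    have hx := ZMod.val_lt x
    have hy := ZMod.val_lt y
    rcases h with ⟨c, hc⟩
    have hc0 : c = 0 := by nlinarith
    rw [hc0, mul_zero] at hc
    have : x.val = y.val := by omega
    exact ZMod.val_injective d this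
  · rintro rfl; simp

section ZAbs
variable {d : ℕ} [NeZero d]

lemma zAbs_le (hodd : Odd d) (x : ZMod d) : zAbs d x ≤ (d - 1) / 2 := by
  have hv : x.val < d := ZMod.val_lt x
  obtain ⟨k, hk⟩ := hodd
  unfold zAbs
  omega

lemma zAbs_natCast (hodd : Odd d) {l : ℕ} (hl : l ≤ (d - 1) / 2) : zAbs d ((l : ZMod d)) = l := by
  obtain ⟨k, hk⟩ := hodd
  have hld : l < d := by omega
  unfold zAbs
  rw [ZMod.val_cast_of_lt hld]
  omega

lemma zAbs_eq_zero_iff {x : ZMod d} : zAbs d x = 0 ↔ x = 0 := by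
  have hv : x.val < d := ZMod.val_lt x
  have hd : d ≠ 0 := NeZero.ne d
  unfold zAbs
  constructor
  · intro h
    have : x.val = 0 := by omega
    rwa [ZMod.val_eq_zero] at this
  · intro h; subst h; simp [ZMod.val_zero]

lemma zAbs_neg (x : ZMod d) : zAbs d (-x) = zAbs d x := by
  by_cases h : x = 0
  · subst h; simp
  · have hv : x.val < d := ZMod.val_lt x
    have hv0 : x.val ≠ 0 := fun hc => h ((ZMod.val_eq_zero x).mp hc)
    unfold zAbs
    rw [ZMod.neg_val, if_neg h]
    omega

lemma zAbs_eq_iff (hodd : Odd d) {l : ℕ} (hl1 : 1 ≤ l) (hl : l ≤ (d - 1) / 2) (x : ZMod d) :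
    zAbs d x = l ↔ x = (l : ZMod d) ∨ x = -(l : ZMod d) := by
  obtain ⟨k, hk⟩ := hodd
  have hld : l < d := by omega
  have hvl : ((l : ZMod d)).val = l := ZMod.val_cast_of_lt hld
  have hv : x.val < d := ZMod.val_lt x
  constructor
  · intro h
    unfold zAbs at h
    have : x.val = l ∨ x.val = d - l := by omega
    rcases this with h' | h'
    · left
      have := ZMod.natCast_zmod_val x
      rw [h'] at this; exact this.symm
    · right
      have := ZMod.natCast_zmod_val x
      rw [h'] at this
      rw [← this]
      push_cast [Nat.cast_sub (le_of_lt hld)]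
      simp
  · rintro (rfl | rfl)
    · unfold zAbs; rw [hvl]; omega
    · have hne : (l : ZMod d) ≠ 0 := by
        intro hc
        have := (ZMod.natCast_eq_zero_iff l d).mp hc
        have := Nat.le_of_dvd (by omega) this
        omega
      unfold zAbs
      rw [ZMod.neg_val, if_neg hne, hvl]
      omega

end ZAbs

section MatrixLayer
variable [NeZero d]

/-- integer "dot product" of the value representatives -/
def dotZ (ξ q : ZMod d × ZMod d) : ℤ :=
  (ξ.1.val : ℤ) * q.1.val + (ξ.2.val : ℤ) * q.2.val

noncomputable def G2 (d : ℕ) [NeZero d] : Matrix (ZMod d × ZMod d) (ZMod d × ZMod d) ℂ :=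
  Matrix.of fun i j => E d (dotZ i j)

noncomputable def lam (d : ℕ) [NeZero d] (a : ZMod d × ZMod d → ℂ) (ξ : ZMod d × ZMod d) : ℂ :=
  ∑ k : ZMod d × ZMod d, a k * E d (dotZ ξ k)

lemma E_neg_eq (m : ℤ) :
    Complex.exp (-(2 * (Real.pi : ℂ) * Complex.I) * (m : ℂ) / d) = E d (-m) := by
  rw [E]; congr 1; push_cast; ring

lemma F2Mat_apply (i j : ZMod d × ZMod d) :
    F2Mat d i j = (d : ℂ)⁻¹ * E d (-(dotZ i j)) := by
  rw [F2Mat, Matrix.of_apply, ← E_neg_eq (dotZ i j)]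
  congr 2
  rw [dotZ]; push_cast; ring

lemma hatKer2_apply (a : ZMod d × ZMod d → ℂ) (j : ZMod d × ZMod d) :
    hatKer2 d a j = ∑ k : ZMod d × ZMod d, a k * E d (-(dotZ j k)) := by
  rw [hatKer2]
  refine Finset.sum_congr rfl fun k _ => ?_
  rw [← E_neg_eq (dotZ j k)]
  congr 2
  rw [dotZ]; push_cast; ring

lemma lam_eq_hat (a : ZMod d × ZMod d → ℂ) (ξ : ZMod d × ZMod d) :
    lam d a ξ = hatKer2 d a (-ξ) := by
  rw [lam, hatKer2_apply]
  refine Finset.sum_congr rfl fun k _ => ?_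
  congr 1
  apply E_congr
  simp only [dotZ]
  push_cast [ZMod.natCast_zmod_val]
  simp only [Prod.fst_neg, Prod.snd_neg]
  ring

lemma conv_mul_F (a : ZMod d × ZMod d → ℂ) :
    convMat2 d a * F2Mat d = Matrix.of (fun i ξ => lam d a ξ * F2Mat d i ξ) := by
  ext i ξ
  rw [Matrix.mul_apply, Matrix.of_apply]
  rw [← Equiv.sum_comp (Equiv.subLeft i) (fun k => convMat2 d a i k * F2Mat d k ξ)]
  have hterm : ∀ m : ZMod d × ZMod d,
      convMat2 d a i (Equiv.subLeft i m) * F2Mat d (Equiv.subLeft i m) ξ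
        = (a m * E d (dotZ ξ m)) * F2Mat d i ξ := by
    intro m
    have h1 : convMat2 d a i (Equiv.subLeft i m) = a m := by
      simp [convMat2, Equiv.subLeft]
    have h2 : F2Mat d (Equiv.subLeft i m) ξ = E d (dotZ ξ m) * F2Mat d i ξ := by
      rw [F2Mat_apply, F2Mat_apply, ← mul_assoc, mul_comm (E d (dotZ ξ m)) ((d:ℂ)⁻¹),
        mul_assoc, ← E_add]
      congr 1
      apply E_congr
      simp only [dotZ, Equiv.subLeft_apply]
      push_cast [ZMod.natCast_zmod_val]
      simp only [Prod.fst_sub, Prod.snd_sub]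
      ring
    rw [h1, h2]; ring
  rw [Finset.sum_congr rfl fun m _ => hterm m, ← Finset.sum_mul, lam]

lemma conv_pow_mul_F (a : ZMod d × ZMod d → ℂ) (n : ℕ) :
    (convMat2 d a) ^ n * F2Mat d = Matrix.of (fun i ξ => (lam d a ξ) ^ n * F2Mat d i ξ) := by
  induction n with
  | zero => ext i ξ; simp
  | succ n ih =>
    rw [pow_succ, Matrix.mul_assoc, conv_mul_F]
    ext i ξ
    rw [Matrix.mul_apply, Matrix.of_apply]
    have : ∀ k : ZMod d × ZMod d,
        (convMat2 d a ^ n) i k * (Matrix.of (fun i ξ => lam d a ξ * F2Mat d i ξ)) k ξ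
          = lam d a ξ * ((convMat2 d a ^ n) i k * F2Mat d k ξ) := by
      intro k; rw [Matrix.of_apply]; ring
    rw [Finset.sum_congr rfl fun k _ => this k, ← Finset.mul_sum, ← Matrix.mul_apply, ih,
      Matrix.of_apply]
    ring

lemma F_mul_G : F2Mat d * G2 d = (d : ℂ) • (1 : Matrix (ZMod d × ZMod d) (ZMod d × ZMod d) ℂ) := by
  have hd' : (d : ℂ) ≠ 0 := Nat.cast_ne_zero.mpr (NeZero.ne d)
  ext i j
  rw [Matrix.mul_apply]
  have hterm : ∀ k : ZMod d × ZMod d,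
      F2Mat d i k * G2 d k j
        = (d : ℂ)⁻¹ * (E d ((k.1.val : ℤ) * ((j.1.val : ℤ) - i.1.val))
            * E d ((k.2.val : ℤ) * ((j.2.val : ℤ) - i.2.val))) := by
    intro k
    rw [F2Mat_apply, G2, Matrix.of_apply, mul_assoc, ← E_add, ← E_add]
    congr 2
    simp only [dotZ]; ring
  rw [Finset.sum_congr rfl fun k _ => hterm k, ← Finset.mul_sum]
  rw [Fintype.sum_prod_type]
  simp only [← Finset.sum_mul, ← Finset.mul_sum]
  rw [sum_E ((j.1.val : ℤ) - i.1.val), sum_E ((j.2.val : ℤ) - i.2.val)]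
  by_cases h : i = j
  · subst h
    rw [if_pos (by simp), if_pos (by simp)]
    rw [Matrix.smul_apply, Matrix.one_apply_eq, smul_eq_mul, mul_one]
    field_simp
  · have hor : ¬((d:ℤ) ∣ (j.1.val:ℤ) - i.1.val) ∨ ¬((d:ℤ) ∣ (j.2.val:ℤ) - i.2.val) := by
      by_contra hc
      push_neg at hc
      exact h (Prod.ext ((val_sub_dvd j.1 i.1).mp hc.1).symm ((val_sub_dvd j.2 i.2).mp hc.2).symm)
    rcases hor with h' | h'
    · rw [if_neg h', Matrix.smul_apply, Matrix.one_apply_ne h, zero_mul, mul_zero, smul_zero]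
    · rw [if_neg h', Matrix.smul_apply, Matrix.one_apply_ne h, mul_zero, mul_zero, smul_zero]

lemma sum_snd_fiber (f : ZMod d × ZMod d → ℂ) (P : ZMod d × ZMod d → Prop) [DecidablePred P]
    (p : ZMod d) :
    ∑ ξ : ZMod d × ZMod d, (if P ξ ∧ ξ.2 = p then f ξ else 0)
      = ∑ s : ZMod d, (if P (s, p) then f (s, p) else 0) := by
  rw [Fintype.sum_prod_type]
  refine Finset.sum_congr rfl fun s _ => ?_
  have h : ∀ t : ZMod d, (if P (s, t) ∧ t = p then f (s, t) else 0)
      = (if t = p then (if P (s, p) then f (s, p) else 0) else 0) := by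
    intro t; by_cases ht : t = p
    · subst ht; simp
    · simp [ht]
  rw [Finset.sum_congr rfl fun t _ => h t,
    Finset.sum_ite_eq' Finset.univ p (fun _ => if P (s, p) then f (s, p) else 0)]
  simp

lemma sum_fst_fiber (f : ZMod d × ZMod d → ℂ) (P : ZMod d × ZMod d → Prop) [DecidablePred P]
    (p : ZMod d) :
    ∑ ξ : ZMod d × ZMod d, (if P ξ ∧ ξ.1 = p then f ξ else 0)
      = ∑ t : ZMod d, (if P (p, t) then f (p, t) else 0) := by
  rw [Fintype.sum_prod_type_right]
  refine Finset.sum_congr rfl fun t _ => ?_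
  have h : ∀ s : ZMod d, (if P (s, t) ∧ s = p then f (s, t) else 0)
      = (if s = p then (if P (p, t) then f (p, t) else 0) else 0) := by
    intro s; by_cases hs : s = p
    · subst hs; simp
    · simp [hs]
  rw [Finset.sum_congr rfl fun s _ => h s,
    Finset.sum_ite_eq' Finset.univ p (fun _ => if P (p, t) then f (p, t) else 0)]
  simp

lemma extract_snd (l : ℕ) (g : ZMod d × ZMod d → ℂ)
    (hT : ∀ j : ZMod d, ∑ ξ : ZMod d × ZMod d,
      (if max (zAbs d ξ.1) (zAbs d ξ.2) = l then g ξ * E d ((ξ.2.val : ℤ) * (j.val : ℤ)) else 0)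
        = 0)
    (p : ZMod d) :
    ∑ s : ZMod d, (if max (zAbs d s) (zAbs d p) = l then g (s, p) else 0) = 0 := by
  have hd' : (d : ℂ) ≠ 0 := Nat.cast_ne_zero.mpr (NeZero.ne d)
  have key : ∀ ξ : ZMod d × ZMod d,
      ∑ j : ZMod d, E d (-((j.val : ℤ) * (p.val : ℤ)))
          * (if max (zAbs d ξ.1) (zAbs d ξ.2) = l
              then g ξ * E d ((ξ.2.val : ℤ) * (j.val : ℤ)) else 0)
        = (if (max (zAbs d ξ.1) (zAbs d ξ.2) = l) ∧ ξ.2 = p then (d : ℂ) * g ξ else 0) := by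
    intro ξ
    by_cases hC : max (zAbs d ξ.1) (zAbs d ξ.2) = l
    · simp only [hC, if_true, true_and]
      have h1 : ∀ j : ZMod d, E d (-((j.val : ℤ) * (p.val : ℤ)))
            * (g ξ * E d ((ξ.2.val : ℤ) * (j.val : ℤ)))
          = g ξ * E d ((j.val : ℤ) * ((ξ.2.val : ℤ) - (p.val : ℤ))) := by
        intro j
        rw [mul_comm (E d (-((j.val : ℤ) * (p.val : ℤ)))) (g ξ * E d ((ξ.2.val : ℤ) * (j.val : ℤ))),
          mul_assoc, ← E_add]
        congr 2; ring
      rw [Finset.sum_congr rfl fun j _ => h1 j, ← Finset.mul_sum, sum_E]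
      by_cases h2 : ξ.2 = p
      · rw [if_pos ((val_sub_dvd ξ.2 p).mpr h2), if_pos h2]; ring
      · rw [if_neg (fun hc => h2 ((val_sub_dvd ξ.2 p).mp hc)), if_neg h2, mul_zero]
    · simp [hC]
  have h0 : ∑ ξ : ZMod d × ZMod d,
      (if (max (zAbs d ξ.1) (zAbs d ξ.2) = l) ∧ ξ.2 = p then (d : ℂ) * g ξ else 0) = 0 := by
    rw [← Finset.sum_congr rfl fun ξ _ => key ξ, Finset.sum_comm]
    refine Finset.sum_eq_zero fun j _ => ?_
    rw [← Finset.mul_sum, hT j, mul_zero]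
  rw [sum_snd_fiber ((d : ℂ) * g ·) (fun ξ => max (zAbs d ξ.1) (zAbs d ξ.2) = l) p] at h0
  have h3 : ∑ s : ZMod d, (if max (zAbs d s) (zAbs d p) = l then (d : ℂ) * g (s, p) else 0)
      = (d : ℂ) * ∑ s : ZMod d, (if max (zAbs d s) (zAbs d p) = l then g (s, p) else 0) := by
    rw [Finset.mul_sum]
    exact Finset.sum_congr rfl fun s _ => by rw [mul_ite, mul_zero]
  rw [h3] at h0
  exact (mul_eq_zero.mp h0).resolve_left hd'

lemma extract_fst (l : ℕ) (g : ZMod d × ZMod d → ℂ)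
    (hT : ∀ j : ZMod d, ∑ ξ : ZMod d × ZMod d,
      (if max (zAbs d ξ.1) (zAbs d ξ.2) = l then g ξ * E d ((ξ.1.val : ℤ) * (j.val : ℤ)) else 0)
        = 0)
    (p : ZMod d) :
    ∑ t : ZMod d, (if max (zAbs d p) (zAbs d t) = l then g (p, t) else 0) = 0 := by
  have hd' : (d : ℂ) ≠ 0 := Nat.cast_ne_zero.mpr (NeZero.ne d)
  have key : ∀ ξ : ZMod d × ZMod d,
      ∑ j : ZMod d, E d (-((j.val : ℤ) * (p.val : ℤ)))
          * (if max (zAbs d ξ.1) (zAbs d ξ.2) = l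
              then g ξ * E d ((ξ.1.val : ℤ) * (j.val : ℤ)) else 0)
        = (if (max (zAbs d ξ.1) (zAbs d ξ.2) = l) ∧ ξ.1 = p then (d : ℂ) * g ξ else 0) := by
    intro ξ
    by_cases hC : max (zAbs d ξ.1) (zAbs d ξ.2) = l
    · simp only [hC, if_true, true_and]
      have h1 : ∀ j : ZMod d, E d (-((j.val : ℤ) * (p.val : ℤ)))
            * (g ξ * E d ((ξ.1.val : ℤ) * (j.val : ℤ)))
          = g ξ * E d ((j.val : ℤ) * ((ξ.1.val : ℤ) - (p.val : ℤ))) := by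
        intro j
        rw [mul_comm (E d (-((j.val : ℤ) * (p.val : ℤ)))) (g ξ * E d ((ξ.1.val : ℤ) * (j.val : ℤ))),
          mul_assoc, ← E_add]
        congr 2; ring
      rw [Finset.sum_congr rfl fun j _ => h1 j, ← Finset.mul_sum, sum_E]
      by_cases h2 : ξ.1 = p
      · rw [if_pos ((val_sub_dvd ξ.1 p).mpr h2), if_pos h2]; ring
      · rw [if_neg (fun hc => h2 ((val_sub_dvd ξ.1 p).mp hc)), if_neg h2, mul_zero]
    · simp [hC]
  have h0 : ∑ ξ : ZMod d × ZMod d,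
      (if (max (zAbs d ξ.1) (zAbs d ξ.2) = l) ∧ ξ.1 = p then (d : ℂ) * g ξ else 0) = 0 := by
    rw [← Finset.sum_congr rfl fun ξ _ => key ξ, Finset.sum_comm]
    refine Finset.sum_eq_zero fun j _ => ?_
    rw [← Finset.mul_sum, hT j, mul_zero]
  rw [sum_fst_fiber ((d : ℂ) * g ·) (fun ξ => max (zAbs d ξ.1) (zAbs d ξ.2) = l) p] at h0
  have h3 : ∑ t : ZMod d, (if max (zAbs d p) (zAbs d t) = l then (d : ℂ) * g (p, t) else 0)
      = (d : ℂ) * ∑ t : ZMod d, (if max (zAbs d p) (zAbs d t) = l then g (p, t) else 0) := by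
    rw [Finset.mul_sum]
    exact Finset.sum_congr rfl fun t _ => by rw [mul_ite, mul_zero]
  rw [h3] at h0
  exact (mul_eq_zero.mp h0).resolve_left hd'

lemma natCast_ne_zero (hodd : Odd d) {l : ℕ} (hl1 : 1 ≤ l) (hlN : l ≤ (d - 1) / 2) :
    ((l : ZMod d)) ≠ 0 := by
  obtain ⟨k, hk⟩ := hodd
  intro hc
  have := Nat.le_of_dvd (by omega) ((ZMod.natCast_eq_zero_iff _ _).mp hc)
  omega

lemma pair_sum (hodd : Odd d) {l : ℕ} (hl1 : 1 ≤ l) (hlN : l ≤ (d - 1) / 2)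
    (g : ZMod d → ℂ) :
    ∑ s : ZMod d, (if zAbs d s = l then g s else 0) = g ((l : ZMod d)) + g (-(l : ZMod d)) := by
  have hne : ((l : ZMod d)) ≠ -(l : ZMod d) := by
    intro hc
    obtain ⟨k, hk⟩ := hodd
    have h2 : ((2 * l : ℕ) : ZMod d) = 0 := by
      push_cast
      rw [two_mul]
      nth_rewrite 1 [hc]
      ring
    have hdvd := Nat.le_of_dvd (by omega) ((ZMod.natCast_eq_zero_iff _ _).mp h2)
    omega
  have hsplit : ∀ s : ZMod d, (if zAbs d s = l then g s else 0)
      = (if s = (l : ZMod d) then g s else 0) + (if s = -(l : ZMod d) then g s else 0) := by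
    intro s
    by_cases h1 : s = (l : ZMod d) <;> by_cases h2 : s = -(l : ZMod d)
    · exact absurd (h1.symm.trans h2) hne
    · simp [zAbs_eq_iff hodd hl1 hlN, h1, h2, hne]
    · simp [zAbs_eq_iff hodd hl1 hlN, h1, h2, hne.symm]
    · simp [zAbs_eq_iff hodd hl1 hlN, h1, h2]
  rw [Finset.sum_congr rfl fun s _ => hsplit s, Finset.sum_add_distrib,
    Finset.sum_ite_eq' Finset.univ ((l : ZMod d)) g,
    Finset.sum_ite_eq' Finset.univ (-(l : ZMod d)) g]
  simp

lemma le_pair_sum (hodd : Odd d) {l : ℕ} (hl1 : 1 ≤ l) (hlN : l ≤ (d - 1) / 2)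
    (g : ZMod d → ℂ) (hmid : ∀ s : ZMod d, zAbs d s < l → g s = 0) :
    ∑ s : ZMod d, (if zAbs d s ≤ l then g s else 0) = g ((l : ZMod d)) + g (-(l : ZMod d)) := by
  have h : ∀ s : ZMod d, (if zAbs d s ≤ l then g s else 0) = (if zAbs d s = l then g s else 0) := by
    intro s
    rcases lt_trichotomy (zAbs d s) l with h | h | h
    · rw [if_pos h.le, hmid s h, if_neg h.ne]
    · simp [h]
    · rw [if_neg (by omega), if_neg (by omega)]
  rw [Finset.sum_congr rfl fun s _ => h s, pair_sum hodd hl1 hlN g]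

lemma two_eq_zero {α β x y : ℂ} (hne : α ≠ β) (h1 : x + y = 0) (h2 : α * x + β * y = 0) :
    x = 0 ∧ y = 0 := by
  have hy : y = -x := by linear_combination h1
  rw [hy] at h2
  have hx : (α - β) * x = 0 := by linear_combination h2
  have : x = 0 := by
    rcases mul_eq_zero.mp hx with h | h
    · exact absurd (sub_eq_zero.mp h) hne
    · exact h
  exact ⟨this, by rw [hy, this, neg_zero]⟩

lemma E_val_ne (hodd : Odd d) {l : ℕ} (hl1 : 1 ≤ l) (hlN : l ≤ (d - 1) / 2) :
    E d ((((l : ZMod d)).val : ℤ)) ≠ E d (((-(l : ZMod d)).val : ℤ)) := by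
  obtain ⟨k, hk⟩ := hodd
  have hld : l < d := by omega
  have hσv : ((l : ZMod d)).val = l := ZMod.val_cast_of_lt hld
  have hσne : (l : ZMod d) ≠ 0 := natCast_ne_zero ⟨k, hk⟩ hl1 hlN
  have hnegv : ((-(l : ZMod d))).val = d - l := by rw [ZMod.neg_val, if_neg hσne, hσv]
  rw [hσv, hnegv]
  intro hc
  rw [E_eq_E_iff (NeZero.ne d)] at hc
  have heq : ((l : ℤ) - ((d - l : ℕ) : ℤ)) = -((d : ℤ) - 2 * l) := by
    push_cast [Nat.cast_sub hld.le]; ring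
  rw [heq, dvd_neg] at hc
  have h2 : (0 : ℤ) < (d : ℤ) - 2 * l := by omega
  have := Int.le_of_dvd h2 hc
  omega

lemma psi_zero (hodd : Odd d) (hd2 : 2 ≤ d) (ψ : ZMod d × ZMod d → ℂ)
    (H : ∀ q : ZMod d × ZMod d, (q.1 = 0 ∨ q.1 = 1 ∨ q.2 = 0 ∨ q.2 = 1) →
      ∀ l, l ≤ (d - 1) / 2 → ∑ ξ : ZMod d × ZMod d,
        (if max (zAbs d ξ.1) (zAbs d ξ.2) = l then ψ ξ * E d (dotZ ξ q) else 0) = 0) :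
    ψ = 0 := by
  haveI : Fact (1 < d) := ⟨hd2⟩
  have hval1 : (1 : ZMod d).val = 1 := ZMod.val_one d
  have R0 : ∀ l, l ≤ (d - 1) / 2 → ∀ p : ZMod d,
      ∑ s : ZMod d, (if max (zAbs d s) (zAbs d p) = l then ψ (s, p) else 0) = 0 := by
    intro l hl p
    refine extract_snd l ψ (fun j => ?_) p
    have hrw : ∀ ξ : ZMod d × ZMod d,
        ψ ξ * E d ((ξ.2.val : ℤ) * (j.val : ℤ)) = ψ ξ * E d (dotZ ξ (0, j)) := by
      intro ξ; congr 2; simp [dotZ, ZMod.val_zero]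
    simp only [hrw]
    exact H (0, j) (Or.inl rfl) l hl
  have R1 : ∀ l, l ≤ (d - 1) / 2 → ∀ p : ZMod d,
      ∑ s : ZMod d, (if max (zAbs d s) (zAbs d p) = l
        then E d ((s.val : ℤ)) * ψ (s, p) else 0) = 0 := by
    intro l hl p
    refine extract_snd l (fun ξ => E d ((ξ.1.val : ℤ)) * ψ ξ) (fun j => ?_) p
    have hrw : ∀ ξ : ZMod d × ZMod d,
        (E d ((ξ.1.val : ℤ)) * ψ ξ) * E d ((ξ.2.val : ℤ) * (j.val : ℤ))
          = ψ ξ * E d (dotZ ξ (1, j)) := by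
      intro ξ
      have h1 : dotZ ξ (1, j) = (ξ.1.val : ℤ) + (ξ.2.val : ℤ) * (j.val : ℤ) := by
        simp [dotZ, hval1]
      rw [h1, E_add]; ring
    simp only [hrw]
    exact H (1, j) (Or.inr (Or.inl rfl)) l hl
  have C0 : ∀ l, l ≤ (d - 1) / 2 → ∀ s : ZMod d,
      ∑ t : ZMod d, (if max (zAbs d s) (zAbs d t) = l then ψ (s, t) else 0) = 0 := by
    intro l hl s
    refine extract_fst l ψ (fun j => ?_) s
    have hrw : ∀ ξ : ZMod d × ZMod d,
        ψ ξ * E d ((ξ.1.val : ℤ) * (j.val : ℤ)) = ψ ξ * E d (dotZ ξ (j, 0)) := by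
      intro ξ; congr 2; simp [dotZ, ZMod.val_zero]
    simp only [hrw]
    exact H (j, 0) (Or.inr (Or.inr (Or.inl rfl))) l hl
  have C1 : ∀ l, l ≤ (d - 1) / 2 → ∀ s : ZMod d,
      ∑ t : ZMod d, (if max (zAbs d s) (zAbs d t) = l
        then E d ((t.val : ℤ)) * ψ (s, t) else 0) = 0 := by
    intro l hl s
    refine extract_fst l (fun ξ => E d ((ξ.2.val : ℤ)) * ψ ξ) (fun j => ?_) s
    have hrw : ∀ ξ : ZMod d × ZMod d,
        (E d ((ξ.2.val : ℤ)) * ψ ξ) * E d ((ξ.1.val : ℤ) * (j.val : ℤ))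
          = ψ ξ * E d (dotZ ξ (j, 1)) := by
      intro ξ
      have h1 : dotZ ξ (j, 1) = (ξ.1.val : ℤ) * (j.val : ℤ) + (ξ.2.val : ℤ) := by
        simp [dotZ, hval1]
      rw [h1, E_add]; ring
    simp only [hrw]
    exact H (j, 1) (Or.inr (Or.inr (Or.inr rfl))) l hl
  have hA : ∀ l, 1 ≤ l → l ≤ (d - 1) / 2 → ∀ p : ZMod d, zAbs d p < l →
      ψ ((l : ZMod d), p) = 0 ∧ ψ (-(l : ZMod d), p) = 0 := by
    intro l hl1 hlN p hp
    have hcond : ∀ s : ZMod d, (max (zAbs d s) (zAbs d p) = l) ↔ (zAbs d s = l) := by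
      intro s; omega
    have e0 := R0 l hlN p
    have e1 := R1 l hlN p
    rw [Finset.sum_congr rfl fun s _ => if_congr (hcond s) rfl rfl,
      pair_sum hodd hl1 hlN (fun s => ψ (s, p))] at e0
    rw [Finset.sum_congr rfl fun s _ => if_congr (hcond s) rfl rfl,
      pair_sum hodd hl1 hlN (fun s => E d ((s.val : ℤ)) * ψ (s, p))] at e1
    exact two_eq_zero (E_val_ne hodd hl1 hlN) e0 e1
  have hB : ∀ l, 1 ≤ l → l ≤ (d - 1) / 2 → ∀ s : ZMod d, zAbs d s < l →
      ψ (s, (l : ZMod d)) = 0 ∧ ψ (s, -(l : ZMod d)) = 0 := by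
    intro l hl1 hlN s hs
    have hcond : ∀ t : ZMod d, (max (zAbs d s) (zAbs d t) = l) ↔ (zAbs d t = l) := by
      intro t; omega
    have e0 := C0 l hlN s
    have e1 := C1 l hlN s
    rw [Finset.sum_congr rfl fun t _ => if_congr (hcond t) rfl rfl,
      pair_sum hodd hl1 hlN (fun t => ψ (s, t))] at e0
    rw [Finset.sum_congr rfl fun t _ => if_congr (hcond t) rfl rfl,
      pair_sum hodd hl1 hlN (fun t => E d ((t.val : ℤ)) * ψ (s, t))] at e1
    exact two_eq_zero (E_val_ne hodd hl1 hlN) e0 e1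
  have hC : ∀ l, 1 ≤ l → l ≤ (d - 1) / 2 → ∀ p : ZMod d, zAbs d p = l →
      ψ ((l : ZMod d), p) = 0 ∧ ψ (-(l : ZMod d), p) = 0 := by
    intro l hl1 hlN p hp
    have hcond : ∀ s : ZMod d, (max (zAbs d s) (zAbs d p) = l) ↔ (zAbs d s ≤ l) := by
      intro s; omega
    have hmid0 : ∀ s : ZMod d, zAbs d s < l → ψ (s, p) = 0 := by
      intro s hs
      rcases (zAbs_eq_iff hodd hl1 hlN p).mp hp with rfl | rfl
      · exact (hB l hl1 hlN s hs).1
      · exact (hB l hl1 hlN s hs).2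
    have e0 := R0 l hlN p
    have e1 := R1 l hlN p
    rw [Finset.sum_congr rfl fun s _ => if_congr (hcond s) rfl rfl,
      le_pair_sum hodd hl1 hlN (fun s => ψ (s, p)) hmid0] at e0
    rw [Finset.sum_congr rfl fun s _ => if_congr (hcond s) rfl rfl,
      le_pair_sum hodd hl1 hlN (fun s => E d ((s.val : ℤ)) * ψ (s, p))
        (fun s hs => by show E d ((s.val : ℤ)) * ψ (s, p) = 0; rw [hmid0 s hs, mul_zero])] at e1
    exact two_eq_zero (E_val_ne hodd hl1 hlN) e0 e1
  funext ξ0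
  obtain ⟨s0, p0⟩ := ξ0
  show ψ (s0, p0) = 0
  obtain ⟨l, hldef⟩ : ∃ l, max (zAbs d s0) (zAbs d p0) = l := ⟨_, rfl⟩
  have hlN : l ≤ (d - 1) / 2 := by
    have h1 := zAbs_le hodd s0
    have h2 := zAbs_le hodd p0
    omega
  by_cases hl0 : l = 0
  · have hs0 : s0 = 0 := zAbs_eq_zero_iff.mp (by omega)
    have hp0 : p0 = 0 := zAbs_eq_zero_iff.mp (by omega)
    subst hs0; subst hp0
    have h00 : zAbs d (0 : ZMod d) = 0 := zAbs_eq_zero_iff.mpr rfl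
    have e0 := R0 0 (Nat.zero_le _) 0
    have hcond : ∀ s : ZMod d, (max (zAbs d s) (zAbs d (0 : ZMod d)) = 0) ↔ (s = 0) := by
      intro s
      rw [h00]
      constructor
      · intro h; exact zAbs_eq_zero_iff.mp (by omega)
      · rintro rfl; simp [h00]
    rw [Finset.sum_congr rfl fun s _ => if_congr (hcond s) rfl rfl,
      Finset.sum_ite_eq' Finset.univ (0 : ZMod d) (fun s => ψ (s, 0))] at e0
    simpa using e0
  · have hl1 : 1 ≤ l := by omega
    rcases Nat.lt_or_ge (zAbs d p0) l with hp | hp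
    · have hs : zAbs d s0 = l := by omega
      rcases (zAbs_eq_iff hodd hl1 hlN s0).mp hs with rfl | rfl
      · exact (hA l hl1 hlN p0 hp).1
      · exact (hA l hl1 hlN p0 hp).2
    · have hpE : zAbs d p0 = l := by omega
      rcases Nat.lt_or_ge (zAbs d s0) l with hs | hs
      · rcases (zAbs_eq_iff hodd hl1 hlN p0).mp hpE with rfl | rfl
        · exact (hB l hl1 hlN s0 hs).1
        · exact (hB l hl1 hlN s0 hs).2
      · have hsE : zAbs d s0 = l := by omega
        rcases (zAbs_eq_iff hodd hl1 hlN s0).mp hsE with rfl | rfl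
        · exact (hC l hl1 hlN p0 hpE).1
        · exact (hC l hl1 hlN p0 hpE).2

lemma lam_level (a : ZMod d × ZMod d → ℂ)
    (hsym : ∀ x y : ZMod d × ZMod d, hatKer2 d a x = hatKer2 d a y ↔
      max (zAbs d x.1) (zAbs d x.2) = max (zAbs d y.1) (zAbs d y.2))
    (x y : ZMod d × ZMod d) :
    lam d a x = lam d a y ↔
      max (zAbs d x.1) (zAbs d x.2) = max (zAbs d y.1) (zAbs d y.2) := by
  rw [lam_eq_hat, lam_eq_hat, hsym (-x) (-y)]
  simp only [Prod.fst_neg, Prod.snd_neg, zAbs_neg]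

end MatrixLayer

end Stmt16

open Stmt16

/-- assume `d` odd and the kernel `a` possesses `ℓ^∞` symmetry in
frequency response, i.e. the level sets of `â` are exactly the sets
`Λ_l = {(s,p) : max(|s|,|p|) = l}` (two frequencies carry the same value of `â` iff
they have the same `ℓ^∞` norm). With `Ω = ({0,1} × ℤ_d) ∪ (ℤ_d × {0,1})` and
`l_{(i,j)} = (d-1)/2`, `Y = {A^n e_{(i,j)} : (i,j) ∈ Ω, n ≤ (d-1)/2}` is a frame. -/
theorem stmt16 (d : ℕ) [NeZero d] (hodd : Odd d) (a : ZMod d × ZMod d → ℂ)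
    (hsym : ∀ x y : ZMod d × ZMod d, hatKer2 d a x = hatKer2 d a y ↔
      max (zAbs d x.1) (zAbs d x.2) = max (zAbs d y.1) (zAbs d y.2)) :
    Submodule.span ℂ {v : ZMod d × ZMod d → ℂ | ∃ q : ZMod d × ZMod d,
        (q.1 = 0 ∨ q.1 = 1 ∨ q.2 = 0 ∨ q.2 = 1) ∧ ∃ n ≤ (d - 1) / 2,
        v = (convMat2 d a) ^ n *ᵥ (Pi.single q 1 : ZMod d × ZMod d → ℂ)} = ⊤ := by
  classical
  by_cases hd1 : d = 1
  · subst hd1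
    rw [eq_top_iff]
    rintro w -
    have hw : w = w (0, 0) • (Pi.single ((0 : ZMod 1), (0 : ZMod 1)) 1 :
        ZMod 1 × ZMod 1 → ℂ) := by
      funext x
      have hx : x = (0, 0) := Subsingleton.elim _ _
      subst hx; simp
    rw [hw]
    refine Submodule.smul_mem _ _ (Submodule.subset_span ?_)
    exact ⟨(0, 0), Or.inl rfl, 0, Nat.zero_le _, by rw [pow_zero, Matrix.one_mulVec]⟩
  have hd2 : 2 ≤ d := by have := NeZero.ne d; omega
  have hd' : (d : ℂ) ≠ 0 := Nat.cast_ne_zero.mpr (NeZero.ne d)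
  by_contra hne
  obtain ⟨φ, hφ0, hφmap⟩ :=
    Submodule.exists_dual_map_eq_bot_of_lt_top (lt_top_iff_ne_top.mpr hne) inferInstance
  set u : ZMod d × ZMod d → ℂ := fun k => φ (Pi.single k 1) with hu
  have hφ_eq : ∀ v : ZMod d × ZMod d → ℂ, φ v = ∑ k : ZMod d × ZMod d, v k * u k := by
    intro v
    rw [LinearMap.pi_apply_eq_sum_univ φ v]
    refine Finset.sum_congr rfl fun k _ => ?_
    rw [smul_eq_mul, hu]
    congr 2
    funext j
    simp [Pi.single_apply, eq_comm]
  have hS : ∀ q : ZMod d × ZMod d, (q.1 = 0 ∨ q.1 = 1 ∨ q.2 = 0 ∨ q.2 = 1) →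
      ∀ n, n ≤ (d - 1) / 2 → (u ᵥ* ((convMat2 d a) ^ n)) q = 0 := by
    intro q hq n hn
    have h0 : φ ((convMat2 d a) ^ n *ᵥ Pi.single q 1) = 0 := by
      have hmem : φ ((convMat2 d a) ^ n *ᵥ Pi.single q 1) ∈
          Submodule.map φ (Submodule.span ℂ {v : ZMod d × ZMod d → ℂ | ∃ q : ZMod d × ZMod d,
            (q.1 = 0 ∨ q.1 = 1 ∨ q.2 = 0 ∨ q.2 = 1) ∧ ∃ n ≤ (d - 1) / 2,
            v = (convMat2 d a) ^ n *ᵥ (Pi.single q 1 : ZMod d × ZMod d → ℂ)}) :=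
        ⟨_, Submodule.subset_span ⟨q, hq, n, hn, rfl⟩, rfl⟩
      rwa [hφmap, Submodule.mem_bot] at hmem
    rw [hφ_eq] at h0
    rw [Matrix.vecMul, dotProduct]
    rw [← h0]
    refine Finset.sum_congr rfl fun k _ => ?_
    simp only [Matrix.mulVec_single, mul_one, MulOpposite.op_one, one_smul, Matrix.col_apply]
    ring
  set ψ : ZMod d × ZMod d → ℂ := fun ξ => (u ᵥ* F2Mat d) ξ with hψ
  have hFpow : ∀ n, (u ᵥ* (convMat2 d a) ^ n) ᵥ* F2Mat d
      = fun ξ => lam d a ξ ^ n * ψ ξ := by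
    intro n
    funext ξ
    rw [Matrix.vecMul_vecMul, conv_pow_mul_F]
    rw [Matrix.vecMul, dotProduct]
    have : ∀ i : ZMod d × ZMod d,
        u i * (Matrix.of fun i ξ => lam d a ξ ^ n * F2Mat d i ξ) i ξ
          = lam d a ξ ^ n * (u i * F2Mat d i ξ) := by
      intro i; rw [Matrix.of_apply]; ring
    rw [Finset.sum_congr rfl fun i _ => this i, ← Finset.mul_sum]
    rw [hψ]
    congr 1
  have EqMain : ∀ q : ZMod d × ZMod d, (q.1 = 0 ∨ q.1 = 1 ∨ q.2 = 0 ∨ q.2 = 1) →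
      ∀ n, n ≤ (d - 1) / 2 →
      ∑ ξ : ZMod d × ZMod d, lam d a ξ ^ n * ψ ξ * E d (dotZ ξ q) = 0 := by
    intro q hq n hn
    have h2 : ((u ᵥ* (convMat2 d a) ^ n) ᵥ* (F2Mat d * G2 d)) q = 0 := by
      rw [F_mul_G]
      have h3 : ∀ k : ZMod d × ZMod d,
          (u ᵥ* (convMat2 d a) ^ n) k * (((d:ℂ) • (1 : Matrix (ZMod d × ZMod d)
            (ZMod d × ZMod d) ℂ)) k q) = if k = q then (d:ℂ) * (u ᵥ* (convMat2 d a) ^ n) k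
              else 0 := by
        intro k
        rw [Matrix.smul_apply, Matrix.one_apply]
        by_cases hk : k = q
        · rw [if_pos hk, if_pos hk, smul_eq_mul, mul_one]; ring
        · rw [if_neg hk, if_neg hk, smul_zero, mul_zero]
      rw [Matrix.vecMul, dotProduct, Finset.sum_congr rfl fun k _ => h3 k,
        Finset.sum_ite_eq' Finset.univ q]
      simp [hS q hq n hn]
    have h5 : ((fun ξ => lam d a ξ ^ n * ψ ξ) ᵥ* G2 d) q
        = ∑ ξ : ZMod d × ZMod d, lam d a ξ ^ n * ψ ξ * E d (dotZ ξ q) := by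
      rw [Matrix.vecMul, dotProduct]
      rfl
    calc ∑ ξ : ZMod d × ZMod d, lam d a ξ ^ n * ψ ξ * E d (dotZ ξ q)
        = ((fun ξ => lam d a ξ ^ n * ψ ξ) ᵥ* G2 d) q := h5.symm
      _ = ((u ᵥ* (convMat2 d a) ^ n ᵥ* F2Mat d) ᵥ* G2 d) q := by rw [hFpow n]
      _ = (u ᵥ* (convMat2 d a) ^ n ᵥ* (F2Mat d * G2 d)) q := by rw [Matrix.vecMul_vecMul]
      _ = 0 := h2
  set N := (d - 1) / 2 with hN
  have hrep : ∀ l : ℕ, l ≤ N → max (zAbs d ((l : ZMod d))) (zAbs d (0 : ZMod d)) = l := by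
    intro l hl
    have h0 : zAbs d (0 : ZMod d) = 0 := zAbs_eq_zero_iff.mpr rfl
    rw [h0, zAbs_natCast hodd hl]
    omega
  have hT : ∀ q : ZMod d × ZMod d, (q.1 = 0 ∨ q.1 = 1 ∨ q.2 = 0 ∨ q.2 = 1) →
      ∀ l, l ≤ N → ∑ ξ : ZMod d × ZMod d,
        (if max (zAbs d ξ.1) (zAbs d ξ.2) = l then ψ ξ * E d (dotZ ξ q) else 0) = 0 := by
    intro q hq
    set c : Fin (N + 1) → ℂ := fun l => lam d a (((l : ℕ) : ZMod d), 0) with hc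
    have hcinj : Function.Injective c := by
      intro l1 l2 h
      have h2 := (lam_level a hsym _ _).mp h
      rw [hrep l1 (Nat.lt_succ_iff.mp l1.isLt), hrep l2 (Nat.lt_succ_iff.mp l2.isLt)] at h2
      exact Fin.ext h2
    set t : Fin (N + 1) → ℂ := fun l => ∑ ξ : ZMod d × ZMod d,
      (if max (zAbs d ξ.1) (zAbs d ξ.2) = (l : ℕ) then ψ ξ * E d (dotZ ξ q) else 0) with ht
    have hlamc : ∀ ξ : ZMod d × ZMod d,
        lam d a ξ = c ⟨max (zAbs d ξ.1) (zAbs d ξ.2), by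
          have h1 := zAbs_le hodd ξ.1
          have h2 := zAbs_le hodd ξ.2
          omega⟩ := by
      intro ξ
      show lam d a ξ = lam d a ((((max (zAbs d ξ.1) (zAbs d ξ.2)) : ℕ) : ZMod d), 0)
      rw [lam_level a hsym]
      exact (hrep _ (by
        have h1 := zAbs_le hodd ξ.1
        have h2 := zAbs_le hodd ξ.2
        omega)).symm
    have hvdm : ∀ i : Fin (N + 1), ∑ j : Fin (N + 1), t j * c j ^ (i : ℕ) = 0 := by
      intro i
      have hEq := EqMain q hq (i : ℕ) (by omega)
      rw [← hEq]
      rw [ht]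
      simp only [Finset.sum_mul]
      rw [Finset.sum_comm]
      refine Finset.sum_congr rfl fun ξ _ => ?_
      have hlt : max (zAbs d ξ.1) (zAbs d ξ.2) < N + 1 := by
        have h1 := zAbs_le hodd ξ.1
        have h2 := zAbs_le hodd ξ.2
        omega
      have hptw : ∀ j : Fin (N + 1),
          (if max (zAbs d ξ.1) (zAbs d ξ.2) = (j : ℕ) then ψ ξ * E d (dotZ ξ q) else 0)
              * c j ^ (i : ℕ)
            = if j = (⟨max (zAbs d ξ.1) (zAbs d ξ.2), hlt⟩ : Fin (N + 1))
                then lam d a ξ ^ (i : ℕ) * ψ ξ * E d (dotZ ξ q) else 0 := by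
        intro j
        by_cases hj : j = (⟨max (zAbs d ξ.1) (zAbs d ξ.2), hlt⟩ : Fin (N + 1))
        · subst hj
          rw [if_pos rfl, if_pos rfl, hlamc ξ]
          ring
        · rw [if_neg hj, if_neg (fun hc' => hj (Fin.ext hc'.symm)), zero_mul]
      rw [Finset.sum_congr rfl fun j _ => hptw j,
        Finset.sum_ite_eq' Finset.univ (⟨max (zAbs d ξ.1) (zAbs d ξ.2), hlt⟩ : Fin (N + 1))]
      simp
    have ht0 := Matrix.eq_zero_of_forall_pow_sum_mul_pow_eq_zero hcinj hvdm
    intro l hl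
    have h4 : t ⟨l, by omega⟩ = 0 := by rw [ht0]; rfl
    rw [ht] at h4
    simpa using h4
  have hψ0 : ψ = 0 := psi_zero hodd hd2 ψ (fun q hq l hl => hT q hq l hl)
  have hu0 : u = 0 := by
    have h1 : u ᵥ* F2Mat d = 0 := by funext ξ; exact congrFun hψ0 ξ
    have h2 : u ᵥ* (F2Mat d * G2 d) = 0 := by
      rw [← Matrix.vecMul_vecMul, h1, Matrix.zero_vecMul]
    rw [F_mul_G] at h2
    funext k
    have h3 := congrFun h2 k
    rw [Matrix.vecMul, dotProduct] at h3
    have h4 : ∀ i : ZMod d × ZMod d,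
        u i * (((d:ℂ) • (1 : Matrix (ZMod d × ZMod d) (ZMod d × ZMod d) ℂ)) i k)
          = if i = k then (d:ℂ) * u i else 0 := by
      intro i
      rw [Matrix.smul_apply, Matrix.one_apply]
      by_cases hik : i = k
      · rw [if_pos hik, if_pos hik, smul_eq_mul, mul_one]; ring
      · rw [if_neg hik, if_neg hik, smul_zero, mul_zero]
    rw [Finset.sum_congr rfl fun i _ => h4 i, Finset.sum_ite_eq' Finset.univ k] at h3
    simp only [Finset.mem_univ, if_true, Pi.zero_apply] at h3
    have := mul_eq_zero.mp h3
    simpa [hd'] using this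
  apply hφ0
  apply LinearMap.ext
  intro v
  rw [hφ_eq v, LinearMap.zero_apply]
  simp [hu0]
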